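/- Fix p, d with pd < 1 and s ∈ ℝ, and for each k set q = (1−pd)/d^k + s/d^{2k}. Then d^k · Σ_{A ∈ 𝒜, |A| ≥ 3} M̄(A)·|A|² → 0 as k → ∞. -/

import Mathlib

open MeasureTheory ProbabilityTheory Filter

/-- Vertices of the tree `T_{d,k}`: finite sequences over `[d]`. The root is `[]`. -/
abbrev Vert (d : ℕ) := List (Fin d)

/-- A percolation configuration: a Boolean (open/closed) for every pair `(v, s)`;
the pair `(v, s)` represents the oriented edge from `v` to `v ++ s`.  Only pairs
with `s.length = 1` (short edges) or `s.length = k` (long edges) are actual edges. -/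
abbrev Config (d : ℕ) := (Vert d × List (Fin d)) → Bool

/-- One open oriented edge step from `v` to `w`. -/
def step (d k : ℕ) (ω : Config d) (v w : Vert d) : Prop :=
  ∃ s : List (Fin d), (s.length = 1 ∨ s.length = k) ∧ w = v ++ s ∧ ω (v, s) = true

/-- The cluster of a set `B` of vertices: all vertices reachable from `B`
by an oriented path of open edges (with the convention `B ⊆ cluster`). -/
def cluster (d k : ℕ) (ω : Config d) (B : Set (Vert d)) : Set (Vert d) :=
  {w | ∃ v ∈ B, Relation.ReflTransGen (step d k ω) v w}

/-- `μ` is the law of Bernoulli bond percolation on `T_{d,k}` in which,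
independently, every short edge is open with probability `p` and every
long edge is open with probability `q`. -/
def IsPercolation (d k : ℕ) (p q : ℝ) (μ : Measure (Config d)) : Prop :=
  IsProbabilityMeasure μ ∧
  iIndepFun (fun e (ω : Config d) => ω e) μ ∧
  (∀ v : Vert d, ∀ s : List (Fin d), s.length = 1 →
      (μ {ω | ω (v, s) = true}).toReal = p) ∧
  (∀ v : Vert d, ∀ s : List (Fin d), s.length = k →
      (μ {ω | ω (v, s) = true}).toReal = q)


/-- One open *short* edge step from `v` to `w`. -/
def shortStep (d : ℕ) (ω : Config d) (v w : Vert d) : Prop :=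
  ∃ s : List (Fin d), s.length = 1 ∧ w = v ++ s ∧ ω (v, s) = true

/-- `C_s^B`: the short cluster of `B`, i.e. all vertices reachable from `B` by oriented
open paths using only short edges (with `B ⊆ C_s^B`). -/
def shortCluster (d : ℕ) (ω : Config d) (B : Set (Vert d)) : Set (Vert d) :=
  {w | ∃ v ∈ B, Relation.ReflTransGen (shortStep d ω) v w}

/-- `C_ℓ^B`: the vertices outside `C_s^B` which are endpoints of open long edges
starting in `C_s^B`. -/
def longCluster (d k : ℕ) (ω : Config d) (B : Set (Vert d)) : Set (Vert d) :=
  {w | w ∉ shortCluster d ω B ∧ ∃ v ∈ shortCluster d ω B,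
    ∃ s : List (Fin d), s.length = k ∧ w = v ++ s ∧ ω (v, s) = true}

/-- `V^v`: the full subtree rooted at `v`. -/
def subtree {d : ℕ} (v : Vert d) : Set (Vert d) := {w | ∃ s : List (Fin d), w = v ++ s}

/-- `V_Γ^v`: the subtree of height `k - 1` rooted at `v`. -/
def gammaSet (d k : ℕ) (v : Vert d) : Set (Vert d) :=
  {w | ∃ s : List (Fin d), s.length < k ∧ w = v ++ s}

/-- A set `B` of vertices is admissible if `B ⊆ V_Γ^u` for some (necessarily unique)
`u ∈ B`, called the base of `B`. -/
def Admissible (d k : ℕ) (B : Set (Vert d)) : Prop :=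
  ∃ u ∈ B, B ⊆ gammaSet d k u

/-- The base `b(B)` of an admissible set `B`. -/
noncomputable def base (d k : ℕ) (B : Set (Vert d)) : Vert d :=
  haveI := Classical.dec (Admissible d k B)
  if h : Admissible d k B then h.choose else []

/-- The relation on `C_ℓ^B`: `u` and `v` are related iff there is `w ∈ C_ℓ^B` with
`u, v ∈ V^w` (for admissible `B` this is an equivalence relation on `C_ℓ^B`). -/
def longRel (d k : ℕ) (ω : Config d) (B : Set (Vert d)) (u v : Vert d) : Prop :=
  u ∈ longCluster d k ω B ∧ v ∈ longCluster d k ω B ∧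
    ∃ w ∈ longCluster d k ω B, u ∈ subtree w ∧ v ∈ subtree w

/-- `ℬ^B`: the collection of equivalence classes of `C_ℓ^B` under `longRel`. -/
def longClasses (d k : ℕ) (ω : Config d) (B : Set (Vert d)) : Set (Set (Vert d)) :=
  {S | ∃ u ∈ longCluster d k ω B, S = {v | longRel d k ω B u v}}

/-- The type `t(B)` of an admissible set `B`: the set of words that must be concatenated
with the base of `B` to produce `B`. -/
noncomputable def typeOf (d k : ℕ) (B : Set (Vert d)) : Set (Vert d) :=
  {v | v ∈ gammaSet d k ([] : Vert d) ∧ base d k B ++ v ∈ B}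

/-- `𝒜`: the set of types, i.e. admissible sets based at the root. -/
def typeSpace (d k : ℕ) : Set (Set (Vert d)) :=
  {A | ([] : Vert d) ∈ A ∧ A ⊆ gammaSet d k ([] : Vert d)}

open scoped ENNReal
open MeasureTheory in
/-- The mean offspring matrix of the exploration branching process:
`M(A, A') = E[#{B' ∈ ℬ^B : t(B') = A'}]` for `B` an admissible set of type `A`
(we take the canonical representative `B = A`, which is admissible with base the root). -/
noncomputable def meanOffspring (d k : ℕ) (μ : Measure (Config d))
    (A A' : Set (Vert d)) : ℝ≥0∞ :=
  ∫⁻ ω, ({B' | B' ∈ longClasses d k ω A ∧ typeOf d k B' = A'}.encard : ℕ∞) ∂μ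

open MeasureTheory in
/-- `M̄(A)`: the expected number of vertices `v ∈ C_ℓ^{{o}}` such that
`C_ℓ^{{o}} ∩ V^v ⊇ {v·u : u ∈ A}`. -/
noncomputable def meanUpper (d k : ℕ) (μ : Measure (Config d))
    (A : Set (Vert d)) : ℝ≥0∞ :=
  ∫⁻ ω, ({v | v ∈ longCluster d k ω {([] : Vert d)} ∧
      ∀ u ∈ A, v ++ u ∈ longCluster d k ω {([] : Vert d)}}.encard : ℕ∞) ∂μ

/-- The height `h(A) = sup_{v ∈ A} h(v)` of a set of vertices. -/
noncomputable def heightSet {d : ℕ} (A : Set (Vert d)) : ℕ :=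
  sSup (List.length '' A)

/-- The parametrization `q = (1-pd)/d^k + s/d^{2k}` of Section 3.3. -/
noncomputable def qparam (d : ℕ) (p s : ℝ) (k : ℕ) : ℝ :=
  (1 - p * d) / (d : ℝ) ^ k + s / (d : ℝ) ^ (2 * k)



section AuxPercolation
open scoped ENNReal NNReal

lemma shortCluster_open {d : ℕ} {ω : Config d} {x : Vert d}
    (hx : x ∈ shortCluster d ω {([] : Vert d)}) :
    ∀ y t : Vert d, t.length = 1 → y ++ t <+: x → ω (y, t) = true := by
  obtain ⟨v, hv, hrt⟩ := hx
  rcases hv with rfl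
  induction hrt with
  | refl => intro y t ht hp; have := hp.length_le; simp [ht] at this
  | tail _ hstep ih =>
    rename_i b c _
    obtain ⟨s, hs1, rfl, hopen⟩ := hstep
    intro y t ht hp
    rcases Nat.lt_or_ge (y.length + t.length) (b ++ s).length with hlt | hge
    · -- prefix of b
      have hle : (y ++ t).length ≤ b.length := by
        have := hp.length_le; simp at this ⊢; simp [hs1] at this hlt; omega
      exact ih y t ht (List.prefix_of_prefix_length_le hp (List.prefix_append b s)
        (by simpa using hle))
    · have hlen : (y ++ t).length = (b ++ s).length := by
        have := hp.length_le; simp at this hge ⊢; omega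
      have heq : y ++ t = b ++ s := hp.eq_of_length hlen
      have hyt : y.length = b.length := by simp [ht, hs1] at hlen ⊢; omega
      have : y = b ∧ t = s := List.append_inj heq hyt
      rcases this with ⟨rfl, rfl⟩; exact hopen

lemma longCluster_struct {d k : ℕ} {ω : Config d} {v : Vert d}
    (hv : v ∈ longCluster d k ω {([] : Vert d)}) :
    k ≤ v.length ∧ v.take (v.length - k) ∈ shortCluster d ω {([] : Vert d)} ∧
      ω (v.take (v.length - k), v.drop (v.length - k)) = true := by
  obtain ⟨-, x, hx, s, hs, rfl, hopen⟩ := hv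
  have hl : (x ++ s).length - k = x.length := by simp [hs]
  rw [hl]
  refine ⟨by simp [hs], ?_, ?_⟩
  · rwa [List.take_left]
  · rwa [List.take_left, List.drop_left]

def shortEdges {d : ℕ} (v : Vert d) (j0 : ℕ) : Finset (Vert d × List (Fin d)) :=
  (Finset.range j0).image fun j => (v.take j, (v.drop j).take 1)

def longEdges {d : ℕ} (k : ℕ) (v : Vert d) (F : Finset (Vert d)) :
    Finset (Vert d × List (Fin d)) :=
  F.image fun u =>
    ((v ++ u).take (v.length + u.length - k), (v ++ u).drop (v.length + u.length - k))

lemma edge_prob_eq {d k : ℕ} {p q : ℝ} {μ : Measure (Config d)}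
    (hperc : IsPercolation d k p q μ) (e : Vert d × List (Fin d)) :
    (e.2.length = 1 → μ ((fun ω : Config d => ω e) ⁻¹' {true}) = ENNReal.ofReal p) ∧
    (e.2.length = k → μ ((fun ω : Config d => ω e) ⁻¹' {true}) = ENNReal.ofReal q) := by
  have hpre : (fun ω : Config d => ω e) ⁻¹' {true} = {ω | ω (e.1, e.2) = true} := by
    ext ω; simp
  haveI := hperc.1
  constructor
  · intro h1
    have := hperc.2.2.1 e.1 e.2 h1
    rw [hpre, ← this, ENNReal.ofReal_toReal (measure_ne_top μ _)]
  · intro hk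
    have := hperc.2.2.2 e.1 e.2 hk
    rw [hpre, ← this, ENNReal.ofReal_toReal (measure_ne_top μ _)]

lemma measure_inter_edges {d k : ℕ} {p q : ℝ} {μ : Measure (Config d)}
    (hperc : IsPercolation d k p q μ) (hk2 : 2 ≤ k)
    (v : Vert d) (j0 : ℕ) (hj0 : j0 ≤ v.length) (hkv : k ≤ v.length)
    (F : Finset (Vert d)) :
    μ (⋂ e ∈ shortEdges v j0 ∪ longEdges k v F, (fun ω : Config d => ω e) ⁻¹' {true})
      = ENNReal.ofReal p ^ j0 * ENNReal.ofReal q ^ F.card := by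
  have hind := hperc.2.1.measure_inter_preimage_eq_mul
    (shortEdges v j0 ∪ longEdges k v F) (sets := fun _ => {true})
    (fun i _ => measurableSet_singleton true)
  rw [hind]
  have hsndshort : ∀ e ∈ shortEdges v j0, e.2.length = 1 := by
    intro e he
    simp only [shortEdges, Finset.mem_image, Finset.mem_range] at he
    obtain ⟨j, hj, rfl⟩ := he
    simp; omega
  have hsndlong : ∀ e ∈ longEdges k v F, e.2.length = k := by
    intro e he
    simp only [longEdges, Finset.mem_image] at he
    obtain ⟨u, hu, rfl⟩ := he
    simp; omega
  have hdisj : Disjoint (shortEdges v j0) (longEdges k v F) := by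
    rw [Finset.disjoint_left]
    intro e hs hl
    have := hsndshort e hs
    have := hsndlong e hl
    omega
  rw [Finset.prod_union hdisj]
  congr 1
  · rw [shortEdges, Finset.prod_image]
    · rw [Finset.prod_congr rfl (fun j hj => (edge_prob_eq hperc _).1 ?_)]
      · simp
      · simp only [Finset.mem_range] at hj; simp; omega
    · intro a ha b hb hab
      simp only [Finset.coe_range, Set.mem_Iio, Finset.mem_coe, Finset.mem_range] at ha hb
      have := congrArg (fun e : Vert d × List (Fin d) => e.1.length) hab
      simpa [Nat.min_eq_left, le_of_lt (lt_of_lt_of_le ha hj0),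
        le_of_lt (lt_of_lt_of_le hb hj0)] using this
  · rw [longEdges, Finset.prod_image]
    · rw [Finset.prod_congr rfl (fun u hu => (edge_prob_eq hperc _).2 ?_)]
      · simp
      · simp; omega
    · intro a ha b hb hab
      have h1 := congrArg (fun e : Vert d × List (Fin d) => e.1.length) hab
      simp only [List.length_take, List.length_append] at h1
      have hlen : a.length = b.length := by omega
      have h2 := congrArg (fun e : Vert d × List (Fin d) => e.1 ++ e.2) hab
      simp only [List.take_append_drop] at h2
      exact List.append_cancel_left h2

lemma exists_height_mem {d k : ℕ} {A : Set (Vert d)} (hAfin : A.Finite)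
    (hroot : ([] : Vert d) ∈ A) (hsub : A ⊆ gammaSet d k ([] : Vert d)) :
    (∃ u ∈ A, u.length = heightSet A) ∧ heightSet A < k ∧
      (∀ u ∈ A, u.length ≤ heightSet A) := by
  have hne : (List.length '' A).Nonempty := ⟨0, ⟨[], hroot, rfl⟩⟩
  have hbdd : BddAbove (List.length '' A) := (hAfin.image _).bddAbove
  have hmem := Nat.sSup_mem hne hbdd
  obtain ⟨u, hu, huh⟩ := hmem
  refine ⟨⟨u, hu, huh⟩, ?_, fun w hw => le_csSup hbdd ⟨w, hw, rfl⟩⟩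
  obtain ⟨s, hs, rfl⟩ := hsub hu
  rw [heightSet, ← huh]; simpa using hs

lemma event_subset {d k : ℕ} {ω : Config d} {A : Set (Vert d)} (hAfin : A.Finite)
    (hroot : ([] : Vert d) ∈ A) (hsub : A ⊆ gammaSet d k ([] : Vert d))
    {v : Vert d} (hkv : k ≤ v.length)
    (hv : v ∈ longCluster d k ω {([] : Vert d)})
    (hA : ∀ u ∈ A, v ++ u ∈ longCluster d k ω {([] : Vert d)}) :
    ∀ e ∈ shortEdges v (v.length - k + heightSet A) ∪ longEdges k v hAfin.toFinset,
      ω e = true := by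
  obtain ⟨⟨ustar, hustar, hustarlen⟩, hhk, hle⟩ := exists_height_mem hAfin hroot hsub
  set m := v.length with hm
  set h := heightSet A with hh
  intro e he
  rcases Finset.mem_union.1 he with he | he
  · -- short edge
    simp only [shortEdges, Finset.mem_image, Finset.mem_range] at he
    obtain ⟨j, hj, rfl⟩ := he
    -- the short cluster witness at depth m - k + h
    have hstar := longCluster_struct (hA ustar hustar)
    have hlen : (v ++ ustar).length = m + h := by simp [hustarlen, hm]
    have hsublen : (v ++ ustar).length - k = m - k + h := by omega
    rw [hsublen] at hstar
    have htake : (v ++ ustar).take (m - k + h) = v.take (m - k + h) := by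
      rw [List.take_append_of_le_length (by omega)]
    rw [htake] at hstar
    refine shortCluster_open hstar.2.1 _ _ ?_ ?_
    · simp; omega
    · have h1 : v.take j ++ (v.drop j).take 1 = v.take (j + 1) := (List.take_add (l := v) (i := j) (j := 1)).symm
      rw [h1]
      have h2 : v.take (j + 1) = (v.take (m - k + h)).take (j + 1) := by
        rw [List.take_take, Nat.min_eq_left (by omega)]
      rw [h2]
      exact List.take_prefix _ _
  · -- long edge
    simp only [longEdges, Finset.mem_image, Set.Finite.mem_toFinset] at he
    obtain ⟨u, hu, rfl⟩ := he
    have hstru := longCluster_struct (hA u hu)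
    have hlen : (v ++ u).length = m + u.length := by simp [hm]
    rw [hlen] at hstru
    exact hstru.2.2

-- grouping a tsum over lists by length
lemma tsum_length_fn {d : ℕ} (c : ℕ → ℝ≥0∞) :
    ∑' v : List (Fin d), c v.length = ∑' m : ℕ, (d : ℝ≥0∞) ^ m * c m := by
  rw [← Equiv.tsum_eq (List.equivSigmaTuple (α := Fin d)).symm (fun v => c v.length)]
  rw [ENNReal.tsum_sigma']
  congr 1
  ext m
  have : ∀ g : Fin m → Fin d,
      ((List.equivSigmaTuple (α := Fin d)).symm ⟨m, g⟩).length = m := by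
    intro g; simp [List.equivSigmaTuple]
  calc ∑' g : Fin m → Fin d, c (((List.equivSigmaTuple (α := Fin d)).symm ⟨m, g⟩).length)
      = ∑' _ : Fin m → Fin d, c m := by exact tsum_congr fun g => by rw [this g]
    _ = (Fintype.card (Fin m → Fin d)) * c m := by
        rw [tsum_fintype]; simp [Finset.sum_const, nsmul_eq_mul]
    _ = (d : ℝ≥0∞) ^ m * c m := by
        rw [Fintype.card_fun]; simp

lemma tsum_shift_geom {k : ℕ} (P Q D : ℝ≥0∞) (nA h : ℕ) :
    (∑' m : ℕ, D ^ m * (if k ≤ m then P ^ (m - k + h) * Q ^ nA else 0))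
      = D ^ k * P ^ h * Q ^ nA * (1 - D * P)⁻¹ := by
  rw [← ENNReal.tsum_geometric (D * P)]
  set F : ℕ → ℝ≥0∞ := fun m => D ^ m * (if k ≤ m then P ^ (m - k + h) * Q ^ nA else 0) with hF
  have hsupp : Function.support F ⊆ Set.range (fun i : ℕ => i + k) := by
    intro m hm
    rcases Nat.lt_or_ge m k with hc | hc
    · exfalso; apply hm; simp [hF, Nat.not_le.2 hc]
    · exact ⟨m - k, by simp; omega⟩
  rw [← Function.Injective.tsum_eq (add_left_injective k) hsupp]
  rw [← ENNReal.tsum_mul_left]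
  apply tsum_congr
  intro i
  have hik : k ≤ i + k := Nat.le_add_left k i
  simp only [hF, hik, if_true, Nat.add_sub_cancel]
  rw [pow_add, pow_add, mul_pow]
  ring

lemma meanUpper_le {d k : ℕ} {p q : ℝ} {μ : Measure (Config d)}
    (hperc : IsPercolation d k p q μ) (hk2 : 2 ≤ k)
    {A : Set (Vert d)} (hAfin : A.Finite)
    (hroot : ([] : Vert d) ∈ A) (hsub : A ⊆ gammaSet d k ([] : Vert d)) :
    meanUpper d k μ A ≤ (d : ℝ≥0∞) ^ k * ENNReal.ofReal p ^ heightSet A *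
      ENNReal.ofReal q ^ hAfin.toFinset.card * (1 - (d : ℝ≥0∞) * ENNReal.ofReal p)⁻¹ := by
  classical
  set h := heightSet A with hh
  set nA := hAfin.toFinset.card with hnA
  have hhk : h < k := (exists_height_mem hAfin hroot hsub).2.1
  -- the measurable "all required edges open" events
  set G : Vert d → Set (Config d) := fun v =>
    if k ≤ v.length then
      ⋂ e ∈ shortEdges v (v.length - k + h) ∪ longEdges k v hAfin.toFinset,
        (fun ω : Config d => ω e) ⁻¹' {true}
    else ∅ with hG
  have hGmeas : ∀ v, MeasurableSet (G v) := by
    intro v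
    simp only [hG]
    split
    · exact MeasurableSet.biInter (Finset.countable_toSet _)
        (fun e _ => (measurable_pi_apply e) (measurableSet_singleton true))
    · exact MeasurableSet.empty
  have hGle : ∀ v, μ (G v) ≤
      (if k ≤ v.length then ENNReal.ofReal p ^ (v.length - k + h) *
        ENNReal.ofReal q ^ nA else 0) := by
    intro v
    simp only [hG]
    split
    · rename_i hkv
      rw [measure_inter_edges hperc hk2 v (v.length - k + h) (by omega) hkv]
    · simp
  -- pointwise bound on the integrand
  have hpt : ∀ ω : Config d,
      (({v | v ∈ longCluster d k ω {([] : Vert d)} ∧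
        ∀ u ∈ A, v ++ u ∈ longCluster d k ω {([] : Vert d)}}.encard : ℕ∞) : ℝ≥0∞)
      ≤ ∑' v : Vert d, (G v).indicator 1 ω := by
    intro ω
    set S := {v | v ∈ longCluster d k ω {([] : Vert d)} ∧
        ∀ u ∈ A, v ++ u ∈ longCluster d k ω {([] : Vert d)}} with hS
    set T := {v : Vert d | ω ∈ G v} with hT
    have hST : S ⊆ T := by
      intro v hv
      have hkv : k ≤ v.length := (longCluster_struct hv.1).1
      have := event_subset hAfin hroot hsub hkv hv.1 hv.2
      simp only [hT, Set.mem_setOf_eq, hG, hkv, if_true]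
      simp only [Set.mem_iInter, Set.mem_preimage, Set.mem_singleton_iff]
      exact fun e he => this e he
    calc ((S.encard : ℕ∞) : ℝ≥0∞) = ∑' _ : S, (1 : ℝ≥0∞) := (ENNReal.tsum_set_one S).symm
      _ = ∑' v : Vert d, S.indicator 1 v := tsum_subtype S 1
      _ ≤ ∑' v : Vert d, T.indicator 1 v := by
          exact Summable.tsum_le_tsum (fun v => Set.indicator_le_indicator_of_subset hST
            (fun _ => zero_le) v) ENNReal.summable ENNReal.summable
      _ = ∑' v : Vert d, (G v).indicator 1 ω := by
          apply tsum_congr; intro v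
          simp only [Set.indicator_apply, hT, Set.mem_setOf_eq, Pi.one_apply]
  calc meanUpper d k μ A ≤ ∫⁻ ω, ∑' v : Vert d, (G v).indicator 1 ω ∂μ := by
        rw [meanUpper]; exact lintegral_mono hpt
    _ = ∑' v : Vert d, ∫⁻ ω, (G v).indicator 1 ω ∂μ := by
        exact lintegral_tsum (fun v => (measurable_one.indicator (hGmeas v)).aemeasurable)
    _ = ∑' v : Vert d, μ (G v) := by
        apply tsum_congr; intro v; exact lintegral_indicator_one (hGmeas v)
    _ ≤ ∑' v : Vert d, (if k ≤ v.length then ENNReal.ofReal p ^ (v.length - k + h) *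
          ENNReal.ofReal q ^ nA else 0) := Summable.tsum_le_tsum hGle ENNReal.summable ENNReal.summable
    _ = (d : ℝ≥0∞) ^ k * ENNReal.ofReal p ^ h * ENNReal.ofReal q ^ nA *
          (1 - (d : ℝ≥0∞) * ENNReal.ofReal p)⁻¹ := by
        rw [tsum_length_fn (fun m => if k ≤ m then ENNReal.ofReal p ^ (m - k + h) *
          ENNReal.ofReal q ^ nA else 0)]
        exact tsum_shift_geom _ _ _ _ _

def listsLen (d m : ℕ) : Finset (Vert d) :=
  (Finset.univ : Finset (List.Vector (Fin d) m)).image List.Vector.toList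

lemma mem_listsLen {d : ℕ} (u : Vert d) : u ∈ listsLen d u.length := by
  simp only [listsLen, Finset.mem_image]
  exact ⟨⟨u, rfl⟩, Finset.mem_univ _, rfl⟩

lemma card_listsLen (d m : ℕ) : (listsLen d m).card = d ^ m := by
  rw [listsLen, Finset.card_image_of_injective _ List.Vector.toList_injective]
  simp [card_vector]

def ballF (d h : ℕ) : Finset (Vert d) := (Finset.range (h + 1)).biUnion (listsLen d)

lemma mem_ballF {d h : ℕ} {u : Vert d} (hu : u.length ≤ h) : u ∈ ballF d h := by
  rw [ballF, Finset.mem_biUnion]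
  exact ⟨u.length, Finset.mem_range.2 (by omega), mem_listsLen u⟩

lemma card_ballF {d h : ℕ} (hd : 2 ≤ d) : (ballF d h).card ≤ 2 * d ^ h := by
  refine le_trans (Finset.card_biUnion_le) ?_
  induction h with
  | zero => simp [card_listsLen]
  | succ n ih =>
    rw [Finset.sum_range_succ]
    have h1 : d ^ (n+1) ≤ d ^ (n+1) := le_refl _
    have h2 : 2 * d ^ n ≤ d ^ (n+1) := by
      rw [pow_succ]; calc 2 * d ^ n = d ^ n * 2 := Nat.mul_comm _ _
        _ ≤ d ^ n * d := Nat.mul_le_mul_left _ hd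
    calc (∑ m ∈ Finset.range (n+1), (listsLen d m).card) + (listsLen d (n+1)).card
        ≤ 2 * d ^ n + d ^ (n+1) := by
          exact Nat.add_le_add ih (by rw [card_listsLen])
      _ ≤ 2 * d ^ (n+1) := by omega

lemma nat_choose_bound {M j : ℕ} (h2 : 2 ≤ j) (hjM : j ≤ M) :
    (j + 1) ^ 2 * M.choose j ≤ 9 * (M ^ 2 * (M - 2).choose (j - 2)) := by
  obtain ⟨i, rfl⟩ : ∃ i, j = i + 2 := ⟨j - 2, by omega⟩
  obtain ⟨m, rfl⟩ : ∃ m, M = m + 2 := ⟨M - 2, by omega⟩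
  simp only [Nat.add_sub_cancel]
  have e1 : (m + 2) * Nat.choose (m + 1) (i + 1) = Nat.choose (m + 2) (i + 2) * (i + 2) := by
    simpa [Nat.succ_eq_add_one] using Nat.add_one_mul_choose_eq (m + 1) (i + 1)
  have e2 : (m + 1) * Nat.choose m i = Nat.choose (m + 1) (i + 1) * (i + 1) := by
    simpa [Nat.succ_eq_add_one] using Nat.add_one_mul_choose_eq m i
  have key : ((i + 2) * (i + 1)) * Nat.choose (m + 2) (i + 2)
      = ((m + 2) * (m + 1)) * Nat.choose m i := by
    calc ((i + 2) * (i + 1)) * Nat.choose (m + 2) (i + 2)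
        = (i + 1) * (Nat.choose (m + 2) (i + 2) * (i + 2)) := by ring
      _ = (i + 1) * ((m + 2) * Nat.choose (m + 1) (i + 1)) := by rw [e1]
      _ = (m + 2) * (Nat.choose (m + 1) (i + 1) * (i + 1)) := by ring
      _ = (m + 2) * ((m + 1) * Nat.choose m i) := by rw [e2]
      _ = ((m + 2) * (m + 1)) * Nat.choose m i := by ring
  have h3 : (i + 2 + 1) ^ 2 ≤ 9 * ((i + 2) * (i + 1)) := by nlinarith
  calc (i + 2 + 1) ^ 2 * Nat.choose (m + 2) (i + 2)
      ≤ (9 * ((i + 2) * (i + 1))) * Nat.choose (m + 2) (i + 2) :=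
        Nat.mul_le_mul_right _ h3
    _ = 9 * (((i + 2) * (i + 1)) * Nat.choose (m + 2) (i + 2)) := by ring
    _ = 9 * (((m + 2) * (m + 1)) * Nat.choose m i) := by rw [key]
    _ ≤ 9 * ((m + 2) ^ 2 * Nat.choose m i) := by
        have : (m + 2) * (m + 1) ≤ (m + 2) ^ 2 := by nlinarith
        exact Nat.mul_le_mul_left _ (Nat.mul_le_mul_right _ this)

lemma sum_powerset_bound {d : ℕ} (S : Finset (Vert d)) (Q : ℝ≥0∞) :
    (∑ F ∈ S.powerset, (if 2 ≤ F.card then Q ^ (F.card + 1) * ((F.card : ℝ≥0∞) + 1) ^ 2 else 0))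
      ≤ 9 * Q ^ 3 * (S.card : ℝ≥0∞) ^ 2 * (1 + Q) ^ S.card := by
  classical
  set M := S.card with hM
  rw [Finset.powerset_card_biUnion, Finset.sum_biUnion (fun i _ j _ hij => Finset.pairwise_disjoint_powersetCard S hij)]
  have inner : ∀ j ∈ Finset.range (M + 1),
      (∑ F ∈ Finset.powersetCard j S,
        (if 2 ≤ F.card then Q ^ (F.card + 1) * ((F.card : ℝ≥0∞) + 1) ^ 2 else 0))
      = (M.choose j : ℝ≥0∞) * (if 2 ≤ j then Q ^ (j + 1) * ((j : ℝ≥0∞) + 1) ^ 2 else 0) := by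
    intro j hj
    rw [Finset.sum_congr rfl (fun F hF => by rw [(Finset.mem_powersetCard.1 hF).2]),
      Finset.sum_const, Finset.card_powersetCard, nsmul_eq_mul]
  rw [Finset.sum_congr rfl inner]
  clear_value M
  rcases Nat.lt_or_ge M 2 with hM2 | hM2
  · have hz : ∀ j ∈ Finset.range (M + 1),
        (M.choose j : ℝ≥0∞) * (if 2 ≤ j then Q ^ (j + 1) * ((j : ℝ≥0∞) + 1) ^ 2 else 0) = 0 := by
      intro j hj
      rw [Finset.mem_range] at hj
      rw [if_neg (by omega)]
      simp
    rw [Finset.sum_congr rfl hz]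
    simp
  · obtain ⟨m, rfl⟩ : ∃ m, M = m + 2 := ⟨M - 2, by omega⟩
    set c : ℕ → ℝ≥0∞ := fun j => if 2 ≤ j then ((m.choose (j - 2) : ℝ≥0∞)) * Q ^ (j - 2) else 0
      with hc
    have step1 : ∀ j ∈ Finset.range (m + 2 + 1),
        (((m + 2).choose j : ℝ≥0∞)) * (if 2 ≤ j then Q ^ (j + 1) * ((j : ℝ≥0∞) + 1) ^ 2 else 0)
        ≤ (9 * Q ^ 3 * ((m + 2 : ℕ) : ℝ≥0∞) ^ 2) * c j := by
      intro j hj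
      rw [Finset.mem_range] at hj
      rcases Nat.lt_or_ge j 2 with hj2 | hj2
      · rw [if_neg (by omega), hc]; simp [Nat.not_le.2 hj2]
      · rw [if_pos hj2, hc]
        simp only [hj2, if_true]
        have hnat := nat_choose_bound hj2 (by omega : j ≤ m + 2)
        have hcast : (((j + 1) ^ 2 * (m + 2).choose j : ℕ) : ℝ≥0∞)
            ≤ (((9 * ((m + 2) ^ 2 * (m + 2 - 2).choose (j - 2)) : ℕ)) : ℝ≥0∞) :=
          Nat.cast_le.2 hnat
        push_cast at hcast
        calc (((m + 2).choose j : ℝ≥0∞)) * (Q ^ (j + 1) * ((j : ℝ≥0∞) + 1) ^ 2)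
            = (((j : ℝ≥0∞) + 1) ^ 2 * ((m + 2).choose j : ℝ≥0∞)) * Q ^ (j + 1) := by ring
          _ ≤ (9 * (((m + 2 : ℕ) : ℝ≥0∞) ^ 2 * (m.choose (j - 2) : ℝ≥0∞))) * Q ^ (j + 1) := by
              apply mul_le_mul_left
              convert hcast using 2 <;> push_cast <;> try ring
          _ = (9 * Q ^ 3 * ((m + 2 : ℕ) : ℝ≥0∞) ^ 2) * ((m.choose (j - 2) : ℝ≥0∞) * Q ^ (j - 2)) := by
              rw [show j + 1 = 3 + (j - 2) by omega, pow_add]; ring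
    calc (∑ j ∈ Finset.range (m + 2 + 1), (((m + 2).choose j : ℝ≥0∞)) *
            (if 2 ≤ j then Q ^ (j + 1) * ((j : ℝ≥0∞) + 1) ^ 2 else 0))
        ≤ ∑ j ∈ Finset.range (m + 2 + 1), (9 * Q ^ 3 * ((m + 2 : ℕ) : ℝ≥0∞) ^ 2) * c j :=
          Finset.sum_le_sum step1
      _ = (9 * Q ^ 3 * ((m + 2 : ℕ) : ℝ≥0∞) ^ 2) * ∑ j ∈ Finset.range (m + 2 + 1), c j := by
          rw [Finset.mul_sum]
      _ ≤ 9 * Q ^ 3 * ((m + 2 : ℕ) : ℝ≥0∞) ^ 2 * (1 + Q) ^ (m + 2) := by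
          apply mul_le_mul_right
          have e3 : ∑ j ∈ Finset.range (m + 2 + 1), c j
              = ∑ i ∈ Finset.range (m + 1), c (i + 2) := by
            rw [Finset.sum_range_succ' c (m + 2),
              Finset.sum_range_succ' (fun i => c (i + 1)) (m + 1)]
            have c0 : c 0 = 0 := by rw [hc]; simp
            have c1 : c 1 = 0 := by rw [hc]; simp
            rw [c0, c1]; simp
          rw [e3]
          have e4 : ∀ i ∈ Finset.range (m + 1), c (i + 2) = Q ^ i * 1 ^ (m - i) *
              (m.choose i : ℝ≥0∞) := by
            intro i _
            rw [hc]; simp [Nat.add_sub_cancel]; ring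
          rw [Finset.sum_congr rfl e4, ← add_pow Q 1 m]
          calc (Q + 1) ^ m ≤ (Q + 1) ^ (m + 2) :=
                pow_le_pow_right' (le_add_self) (by omega)
            _ = (1 + Q) ^ (m + 2) := by rw [add_comm]
      _ = 9 * Q ^ 3 * (((m + 2 : ℕ) : ℝ≥0∞)) ^ 2 * (1 + Q) ^ (m + 2) := rfl

lemma gammaSet_finite {d k : ℕ} : (gammaSet d k ([] : Vert d)).Finite := by
  apply Set.Finite.subset (ballF d (k - 1)).finite_toSet
  rintro u ⟨s, hs, rfl⟩
  simpa using mem_ballF (h := k - 1) (by simpa using Nat.le_sub_one_of_lt hs)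

lemma tsum_typeSpace_le {d k : ℕ} (hd : 2 ≤ d) (hk2 : 2 ≤ k) (P Q C0 : ℝ≥0∞)
    (f : {A : Set (Vert d) // A ∈ typeSpace d k ∧ 3 ≤ A.encard} → ℝ≥0∞)
    (hf : ∀ A, ∀ hAfin : A.1.Finite,
      f A ≤ C0 * (P ^ heightSet A.1 * (Q ^ hAfin.toFinset.card * ((hAfin.toFinset.card : ℝ≥0∞)) ^ 2))) :
    ∑' A, f A ≤ C0 * (36 * Q ^ 3 * (1 + Q) ^ (2 * d ^ (k - 1)) *
      ((k : ℝ≥0∞) * (1 + (P * (d : ℝ≥0∞) ^ 2) ^ (k - 1)))) := by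
  classical
  have hfin : ∀ A : {A : Set (Vert d) // A ∈ typeSpace d k ∧ 3 ≤ A.encard}, A.1.Finite := fun A => Set.Finite.subset gammaSet_finite A.2.1.2
  set KQ := (1 + Q) ^ (2 * d ^ (k - 1)) with hKQ
  set g : ℕ × Finset (Vert d) → ℝ≥0∞ := fun x =>
    if x.2 ⊆ ballF d x.1 ∧ 2 ≤ x.2.card ∧ x.1 < k then
      P ^ x.1 * (Q ^ (x.2.card + 1) * ((x.2.card : ℝ≥0∞) + 1) ^ 2) else 0 with hg
  set inj : {A : Set (Vert d) // A ∈ typeSpace d k ∧ 3 ≤ A.encard} → ℕ × Finset (Vert d) :=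
    fun A => (heightSet A.1, ((hfin A).toFinset).erase []) with hinj
  have hroot : ∀ A : {A : Set (Vert d) // A ∈ typeSpace d k ∧ 3 ≤ A.encard}, ([] : Vert d) ∈ (hfin A).toFinset := by
    intro A; rw [Set.Finite.mem_toFinset]; exact A.2.1.1
  have hinjective : Function.Injective inj := by
    intro A B hAB
    rw [hinj, Prod.mk.injEq] at hAB
    have h1 : (hfin A).toFinset = (hfin B).toFinset := by
      rw [← Finset.insert_erase (hroot A), ← Finset.insert_erase (hroot B), hAB.2]
    apply Subtype.ext
    rw [← (hfin A).coe_toFinset, ← (hfin B).coe_toFinset, h1]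
  have hcard3 : ∀ A : {A : Set (Vert d) // A ∈ typeSpace d k ∧ 3 ≤ A.encard}, 3 ≤ (hfin A).toFinset.card := by
    intro A
    have := A.2.2
    rw [(hfin A).encard_eq_coe_toFinset_card] at this
    exact_mod_cast this
  have hfg : ∀ A : {A : Set (Vert d) // A ∈ typeSpace d k ∧ 3 ≤ A.encard},
      f A ≤ C0 * g (inj A) := by
    intro A
    obtain ⟨-, hhk, hle⟩ := exists_height_mem (hfin A) A.2.1.1 A.2.1.2
    have hsubF : ((hfin A).toFinset).erase [] ⊆ ballF d (heightSet A.1) := by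
      intro u hu
      have hu1 : u ∈ (hfin A).toFinset := Finset.mem_of_mem_erase hu
      rw [Set.Finite.mem_toFinset] at hu1
      exact mem_ballF (hle u hu1)
    have hcard : (((hfin A).toFinset).erase []).card + 1 = (hfin A).toFinset.card := by
      rw [Finset.card_erase_of_mem (hroot A)]
      have := hcard3 A; omega
    have hcond : (((hfin A).toFinset).erase []) ⊆ ballF d (heightSet A.1) ∧
        2 ≤ (((hfin A).toFinset).erase []).card ∧ heightSet A.1 < k :=
      ⟨hsubF, by have := hcard3 A; omega, hhk⟩
    calc f A ≤ C0 * (P ^ heightSet A.1 * (Q ^ (hfin A).toFinset.card *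
          ((hfin A).toFinset.card : ℝ≥0∞) ^ 2)) := hf A (hfin A)
      _ = C0 * g (inj A) := by
          congr 1
          rw [hg, hinj]
          simp only [hcond, if_pos]
          rw [hcard]
          congr 2
          rw [← hcard]
          push_cast
          ring
  have hgtotal : ∑' x : ℕ × Finset (Vert d), g x ≤ 36 * Q ^ 3 * KQ *
      ((k : ℝ≥0∞) * (1 + (P * (d : ℝ≥0∞) ^ 2) ^ (k - 1))) := by
    calc ∑' x : ℕ × Finset (Vert d), g x
        = ∑' h : ℕ, ∑' F : Finset (Vert d), g (h, F) := ENNReal.tsum_prod'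
        _ ≤ ∑' h : ℕ, (if h < k then P ^ h * (9 * Q ^ 3 * ((ballF d h).card : ℝ≥0∞) ^ 2 *
              (1 + Q) ^ (ballF d h).card) else 0) := by
            apply Summable.tsum_le_tsum _ ENNReal.summable ENNReal.summable
            intro h
            have hsum : ∑' F : Finset (Vert d), g (h, F)
                = ∑ F ∈ (ballF d h).powerset, g (h, F) := by
              apply tsum_eq_sum
              intro F hF
              rw [hg]
              simp only
              rw [if_neg]
              intro hcond
              exact hF (Finset.mem_powerset.2 hcond.1)
            rw [hsum]
            rcases Nat.lt_or_ge h k with hhk | hhk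
            · rw [if_pos hhk]
              have : ∀ F ∈ (ballF d h).powerset, g (h, F) = P ^ h *
                  (if 2 ≤ F.card then Q ^ (F.card + 1) * ((F.card : ℝ≥0∞) + 1) ^ 2 else 0) := by
                intro F hF
                rw [hg]
                simp only
                rcases Nat.lt_or_ge F.card 2 with hc | hc
                · rw [if_neg (by omega), if_neg (by omega), mul_zero]
                · rw [if_pos ⟨Finset.mem_powerset.1 hF, hc, hhk⟩, if_pos hc]
              rw [Finset.sum_congr rfl this, ← Finset.mul_sum]
              exact mul_le_mul_right (sum_powerset_bound _ _) _
            · rw [if_neg (by omega)]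
              apply le_of_eq
              apply Finset.sum_eq_zero
              intro F hF
              rw [hg]
              simp only
              rw [if_neg (by omega)]
        _ ≤ ∑' h : ℕ, (if h < k then P ^ h * (36 * Q ^ 3 * KQ * (((d : ℝ≥0∞)) ^ 2) ^ h) else 0) := by
            apply Summable.tsum_le_tsum _ ENNReal.summable ENNReal.summable
            intro h
            rcases Nat.lt_or_ge h k with hhk | hhk
            · rw [if_pos hhk, if_pos hhk]
              apply mul_le_mul_right
              have hM : ((ballF d h).card : ℝ≥0∞) ≤ 2 * ((d : ℝ≥0∞)) ^ h := by
                calc ((ballF d h).card : ℝ≥0∞) ≤ ((2 * d ^ h : ℕ) : ℝ≥0∞) :=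
                      Nat.cast_le.2 (card_ballF hd)
                  _ = 2 * ((d : ℝ≥0∞)) ^ h := by push_cast; ring
              have hMk : (ballF d h).card ≤ 2 * d ^ (k - 1) := by
                calc (ballF d h).card ≤ 2 * d ^ h := card_ballF hd
                  _ ≤ 2 * d ^ (k - 1) := by
                      apply Nat.mul_le_mul_left
                      exact Nat.pow_le_pow_right (by omega) (by omega)
              have hsq : (2 * ((d : ℝ≥0∞)) ^ h) ^ 2 = 4 * (((d : ℝ≥0∞)) ^ 2) ^ h := by
                rw [mul_pow, ← pow_mul, ← pow_mul, mul_comm h 2]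
                norm_num
              calc 9 * Q ^ 3 * ((ballF d h).card : ℝ≥0∞) ^ 2 * (1 + Q) ^ (ballF d h).card
                  ≤ 9 * Q ^ 3 * (2 * ((d : ℝ≥0∞)) ^ h) ^ 2 * KQ := by
                    apply mul_le_mul'
                    · exact mul_le_mul_right (pow_le_pow_left' hM 2) _
                    · rw [hKQ]
                      exact pow_le_pow_right' le_self_add hMk
                _ = 36 * Q ^ 3 * KQ * (((d : ℝ≥0∞)) ^ 2) ^ h := by
                    rw [hsq]; ring
            · rw [if_neg (by omega), if_neg (by omega)]
        _ ≤ 36 * Q ^ 3 * KQ * ((k : ℝ≥0∞) * (1 + (P * (d : ℝ≥0∞) ^ 2) ^ (k - 1))) := by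
            rw [tsum_eq_sum (s := Finset.range k) (fun h hh => by
              rw [if_neg (by simpa using fun hc => hh (Finset.mem_range.2 hc))])]
            have e1 : ∀ h ∈ Finset.range k,
                (if h < k then P ^ h * (36 * Q ^ 3 * KQ * (((d : ℝ≥0∞)) ^ 2) ^ h) else 0)
                = (36 * Q ^ 3 * KQ) * (P * (d : ℝ≥0∞) ^ 2) ^ h := by
              intro h hh
              rw [Finset.mem_range] at hh
              rw [if_pos hh, mul_pow]
              ring
            rw [Finset.sum_congr rfl e1, ← Finset.mul_sum]
            apply mul_le_mul_right
            calc ∑ h ∈ Finset.range k, (P * (d : ℝ≥0∞) ^ 2) ^ h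
                ≤ ∑ _h ∈ Finset.range k, (1 + (P * (d : ℝ≥0∞) ^ 2) ^ (k - 1)) := by
                  apply Finset.sum_le_sum
                  intro h hh
                  rw [Finset.mem_range] at hh
                  rcases le_total (P * (d : ℝ≥0∞) ^ 2) 1 with hle | hle
                  · exact le_trans (pow_le_one' hle h) le_self_add
                  · calc (P * (d : ℝ≥0∞) ^ 2) ^ h ≤ (P * (d : ℝ≥0∞) ^ 2) ^ (k - 1) :=
                          pow_le_pow_right' hle (by omega)
                      _ ≤ 1 + (P * (d : ℝ≥0∞) ^ 2) ^ (k - 1) := le_add_self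
              _ = (k : ℝ≥0∞) * (1 + (P * (d : ℝ≥0∞) ^ 2) ^ (k - 1)) := by
                  rw [Finset.sum_const, Finset.card_range, nsmul_eq_mul]
  calc ∑' A, f A ≤ ∑' A, C0 * g (inj A) :=
        Summable.tsum_le_tsum hfg ENNReal.summable ENNReal.summable
    _ ≤ ∑' x : ℕ × Finset (Vert d), C0 * g x :=
        Summable.tsum_le_tsum_of_inj inj hinjective (fun _ _ => zero_le) (fun _ => le_rfl)
          ENNReal.summable ENNReal.summable
    _ = C0 * ∑' x : ℕ × Finset (Vert d), g x := ENNReal.tsum_mul_left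
    _ ≤ C0 * (36 * Q ^ 3 * KQ * ((k : ℝ≥0∞) * (1 + (P * (d : ℝ≥0∞) ^ 2) ^ (k - 1)))) :=
        mul_le_mul_right hgtotal _

lemma tendsto_nat_mul_pow {r : ℝ≥0∞} (hr : r < 1) :
    Tendsto (fun k : ℕ => (k : ℝ≥0∞) * r ^ k) atTop (nhds 0) := by
  lift r to ℝ≥0 using hr.ne_top
  have hr1 : r < 1 := by exact_mod_cast hr
  have hreal : Tendsto (fun k : ℕ => (k : ℝ) * (r : ℝ) ^ k) atTop (nhds 0) := by
    have hs : Summable (fun k : ℕ => (k : ℝ) ^ 1 * (r : ℝ) ^ k) :=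
      summable_pow_mul_geometric_of_norm_lt_one 1
        (by rw [Real.norm_eq_abs, abs_of_nonneg r.coe_nonneg]; exact_mod_cast hr1)
    simpa [pow_one] using hs.tendsto_atTop_zero
  have hnn : Tendsto (fun k : ℕ => (k : ℝ≥0) * r ^ k) atTop (nhds 0) := by
    rw [← NNReal.tendsto_coe]
    simpa using hreal
  have : Tendsto (fun k : ℕ => (((k : ℝ≥0) * r ^ k : ℝ≥0) : ℝ≥0∞)) atTop (nhds ((0 : ℝ≥0) : ℝ≥0∞)) :=
    (ENNReal.tendsto_coe).2 hnn
  simpa using this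

lemma tendsto_nat_mul_pow_pred {r : ℝ≥0∞} (hr : r < 1) :
    Tendsto (fun k : ℕ => (k : ℝ≥0∞) * r ^ (k - 1)) atTop (nhds 0) := by
  rw [← tendsto_add_atTop_iff_nat 1]
  have : (fun k : ℕ => ((k + 1 : ℕ) : ℝ≥0∞) * r ^ (k + 1 - 1))
      = fun k : ℕ => (k : ℝ≥0∞) * r ^ k + r ^ k := by
    funext k
    push_cast
    ring
  rw [this]
  simpa using (tendsto_nat_mul_pow hr).add (ENNReal.tendsto_pow_atTop_nhds_zero_of_lt_one hr)

end AuxPercolation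

/-- **Lemma 3.10** (de Lima–Szabó–Valesin): under the parametrization
`q = (1-pd)/d^k + s/d^{2k}`, we have `d^k · Σ_{A ∈ 𝒜, |A| ≥ 3} M̄(A)·|A|² → 0`
as `k → ∞`. -/
theorem meanUpper_large_types_vanish (d : ℕ) (hd : 2 ≤ d)
    (p : ℝ) (hp0 : 0 ≤ p) (hpd : p * d < 1) (s : ℝ)
    (μ : ℕ → Measure (Config d))
    (hμ : ∀ k, 2 ≤ k → qparam d p s k ∈ Set.Icc (0 : ℝ) 1 →
      IsPercolation d k p (qparam d p s k) (μ k)) :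
    Tendsto
      (fun k : ℕ => (d : ℝ≥0∞) ^ k *
        ∑' A : {A : Set (Vert d) // A ∈ typeSpace d k ∧ 3 ≤ A.encard},
          meanUpper d k (μ k) A.1 * ((A.1.encard : ℕ∞) : ℝ≥0∞) ^ 2)
      atTop (nhds 0) := by
  classical
  have hd1 : (1 : ℝ) < d := by exact_mod_cast hd.trans_lt' one_lt_two
  have hd0R : (0 : ℝ) < d := by linarith
  set P := ENNReal.ofReal p with hP
  set Creal := (1 - p * d) + |s| with hCreal
  have hpd0 : (0 : ℝ) < 1 - p * d := by linarith
  have hCreal0 : (0 : ℝ) < Creal := by positivity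
  set Cq := ENNReal.ofReal Creal with hCq
  set Kconst := ENNReal.ofReal (Real.exp (2 * Creal)) with hKconst
  have hdP : (d : ℝ≥0∞) * P < 1 := by
    rw [hP, ← ENNReal.ofReal_natCast d, ← ENNReal.ofReal_mul (by positivity)]
    rw [show (1 : ℝ≥0∞) = ENNReal.ofReal 1 by simp]
    exact ENNReal.ofReal_lt_ofReal_iff_of_nonneg (by positivity) |>.2 (by rw [mul_comm]; linarith)
  set c2 := (1 - (d : ℝ≥0∞) * P)⁻¹ with hc2
  have hc2top : c2 ≠ ⊤ := ENNReal.inv_ne_top.2 (tsub_pos_of_lt hdP).ne'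
  set rD := ((d : ℝ≥0∞))⁻¹ with hrDdef
  set rP := P * (d : ℝ≥0∞) with hrPdef
  have hdtop : (d : ℝ≥0∞) ≠ ⊤ := ENNReal.natCast_ne_top d
  have hd0E : (d : ℝ≥0∞) ≠ 0 := by exact_mod_cast (by omega : d ≠ 0)
  have hrD : rD < 1 := ENNReal.inv_lt_one.2 (by exact_mod_cast hd1)
  have hrP : rP < 1 := by rw [hrPdef, mul_comm]; exact hdP
  set Cfinal := 36 * c2 * Kconst * Cq ^ 3 with hCfinal
  have hCfinaltop : Cfinal ≠ ⊤ := by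
    rw [hCfinal]
    exact ENNReal.mul_ne_top (ENNReal.mul_ne_top (ENNReal.mul_ne_top (by simp) hc2top)
      ENNReal.ofReal_ne_top) (ENNReal.pow_ne_top ENNReal.ofReal_ne_top)
  have hbound_tendsto : Tendsto
      (fun k : ℕ => Cfinal * ((k : ℝ≥0∞) * rD ^ k + (k : ℝ≥0∞) * rP ^ (k - 1)))
      atTop (nhds 0) := by
    have h0 := (tendsto_nat_mul_pow hrD).add (tendsto_nat_mul_pow_pred hrP)
    rw [add_zero] at h0
    have := ENNReal.Tendsto.const_mul h0 (Or.inr hCfinaltop)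
    simpa using this
  apply tendsto_of_tendsto_of_tendsto_of_le_of_le' tendsto_const_nhds hbound_tendsto
  · exact Eventually.of_forall (fun _ => zero_le)
  · have hdk : Tendsto (fun k : ℕ => ((d : ℝ)) ^ k) atTop atTop :=
      tendsto_pow_atTop_atTop_of_one_lt hd1
    filter_upwards [hdk.eventually_ge_atTop (max Creal (|s| / (1 - p * d))),
      eventually_ge_atTop 2] with k hDk hk2
    set D := ((d : ℝ)) ^ k with hD
    have hD0 : (0 : ℝ) < D := by positivity
    have hD1 : (1 : ℝ) ≤ D := one_le_pow₀ (by linarith)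
    have hDC : Creal ≤ D := le_trans (le_max_left _ _) hDk
    have hDs : |s| / (1 - p * d) ≤ D := le_trans (le_max_right _ _) hDk
    have hsD : |s| ≤ (1 - p * d) * D := by
      rw [div_le_iff₀ hpd0] at hDs; linarith [hDs]
    have hD2 : ((d : ℝ)) ^ (2 * k) = D * D := by rw [two_mul, pow_add]
    -- bounds on q
    set q := qparam d p s k with hq
    have hqC : q ≤ Creal / D := by
      rw [hq, qparam, ← hD, hD2, hCreal]
      have h1 : s / (D * D) ≤ |s| / (D * D) := by
        apply div_le_div_of_nonneg_right (le_abs_self s) (by positivity) |>.trans_eq rfl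
      have h2 : |s| / (D * D) ≤ |s| / D := by
        apply div_le_div_of_nonneg_left (abs_nonneg s) hD0
        nlinarith
      rw [add_div]
      linarith
    have hq0 : 0 ≤ q := by
      rw [hq, qparam, ← hD, hD2]
      have h1 : |s| / (D * D) ≤ (1 - p * d) / D := by
        rw [div_le_div_iff₀ (by positivity) hD0]
        nlinarith
      have h2 : -(|s| / (D * D)) ≤ s / (D * D) := by
        apply div_le_div_of_nonneg_right (neg_abs_le s) (by positivity) |>.trans_eq rfl |>.trans_eq' (by rw [neg_div])
      linarith
    have hq1 : q ≤ 1 := hqC.trans ((div_le_one hD0).2 hDC)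
    have hperc := hμ k hk2 ⟨hq0, hq1⟩
    set Q := ENNReal.ofReal q with hQ
    -- ℝ≥0∞ bounds
    have hofD : ENNReal.ofReal D = (d : ℝ≥0∞) ^ k := by
      rw [hD, ENNReal.ofReal_pow (by positivity), ENNReal.ofReal_natCast]
    have hQle : Q ≤ Cq * rD ^ k := by
      calc Q ≤ ENNReal.ofReal (Creal / D) := ENNReal.ofReal_le_ofReal hqC
        _ = Cq * rD ^ k := by
            rw [div_eq_mul_inv, ENNReal.ofReal_mul hCreal0.le,
              ENNReal.ofReal_inv_of_pos hD0, hofD, hrDdef, ← ENNReal.inv_pow]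
    have hKQle : (1 + Q) ^ (2 * d ^ (k - 1)) ≤ Kconst := by
      set N := 2 * d ^ (k - 1) with hN
      have hNle : (N : ℝ) ≤ 2 * D := by
        rw [hN, hD]
        push_cast
        have : ((d : ℝ)) ^ (k - 1) ≤ ((d : ℝ)) ^ k :=
          pow_le_pow_right₀ (by linarith) (by omega)
        linarith
      have h1Q : 1 + Q ≤ ENNReal.ofReal (1 + Creal / D) := by
        rw [ENNReal.ofReal_add (by norm_num) (by positivity), ENNReal.ofReal_one]
        exact add_le_add_right (ENNReal.ofReal_le_ofReal hqC) 1
      calc (1 + Q) ^ N ≤ (ENNReal.ofReal (1 + Creal / D)) ^ N := pow_le_pow_left' h1Q N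
        _ = ENNReal.ofReal ((1 + Creal / D) ^ N) := by
            rw [ENNReal.ofReal_pow (by positivity)]
        _ ≤ Kconst := by
            rw [hKconst]
            apply ENNReal.ofReal_le_ofReal
            have hstep : (1 + Creal / D) ^ N ≤ (Real.exp (Creal / D)) ^ N := by
              apply pow_le_pow_left₀ (by positivity)
              have := Real.add_one_le_exp (Creal / D)
              linarith
            have hstep2 : (Real.exp (Creal / D)) ^ N = Real.exp ((N : ℝ) * (Creal / D)) := by
              rw [← Real.exp_nat_mul]
            have hstep3 : (N : ℝ) * (Creal / D) ≤ 2 * Creal := by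
              calc (N : ℝ) * (Creal / D) = ((N : ℝ) / D) * Creal := by ring
                _ ≤ 2 * Creal := by
                    apply mul_le_mul_of_nonneg_right _ hCreal0.le
                    rw [div_le_iff₀ hD0]; linarith
            calc (1 + Creal / D) ^ N ≤ (Real.exp (Creal / D)) ^ N := hstep
              _ = Real.exp ((N : ℝ) * (Creal / D)) := hstep2
              _ ≤ Real.exp (2 * Creal) := Real.exp_le_exp.2 hstep3
    -- per-A bound and sum
    have hsum := tsum_typeSpace_le (k := k) hd hk2 P Q (c2 * (d : ℝ≥0∞) ^ k)
      (fun A => meanUpper d k (μ k) A.1 * ((A.1.encard : ℕ∞) : ℝ≥0∞) ^ 2) ?_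
    · -- final arithmetic
      have hpow1 : (d : ℝ≥0∞) ^ k * rD ^ k = 1 := by
        rw [hrDdef, ← mul_pow, ENNReal.mul_inv_cancel hd0E hdtop, one_pow]
      have hpow2 : (d : ℝ≥0∞) ^ (k - 1) * rD ^ (k - 1) = 1 := by
        rw [hrDdef, ← mul_pow, ENNReal.mul_inv_cancel hd0E hdtop, one_pow]
      have hrD1 : rD ≤ 1 := hrD.le
      calc (d : ℝ≥0∞) ^ k * ∑' A : {A : Set (Vert d) // A ∈ typeSpace d k ∧ 3 ≤ A.encard},
            meanUpper d k (μ k) A.1 * ((A.1.encard : ℕ∞) : ℝ≥0∞) ^ 2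
          ≤ (d : ℝ≥0∞) ^ k * ((c2 * (d : ℝ≥0∞) ^ k) * (36 * Q ^ 3 *
              (1 + Q) ^ (2 * d ^ (k - 1)) *
              ((k : ℝ≥0∞) * (1 + (P * (d : ℝ≥0∞) ^ 2) ^ (k - 1))))) :=
            mul_le_mul_right hsum _
        _ ≤ (d : ℝ≥0∞) ^ k * ((c2 * (d : ℝ≥0∞) ^ k) * (36 * (Cq * rD ^ k) ^ 3 *
              Kconst * ((k : ℝ≥0∞) * (1 + (P * (d : ℝ≥0∞) ^ 2) ^ (k - 1))))) := by
            apply mul_le_mul_right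
            apply mul_le_mul_right
            apply mul_le_mul_left
            exact mul_le_mul' (mul_le_mul_right (pow_le_pow_left' hQle 3) _) hKQle
        _ = Cfinal * ((k : ℝ≥0∞) * (rD ^ k * (1 + (P * (d : ℝ≥0∞) ^ 2) ^ (k - 1)))) := by
            rw [hCfinal]
            have h3 : (Cq * rD ^ k) ^ 3 = Cq ^ 3 * (rD ^ k * (rD ^ k * rD ^ k)) := by ring
            rw [h3]
            calc (d : ℝ≥0∞) ^ k * ((c2 * (d : ℝ≥0∞) ^ k) * (36 * (Cq ^ 3 *
                    (rD ^ k * (rD ^ k * rD ^ k))) * Kconst *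
                    ((k : ℝ≥0∞) * (1 + (P * (d : ℝ≥0∞) ^ 2) ^ (k - 1)))))
                = (36 * c2 * Kconst * Cq ^ 3) * ((k : ℝ≥0∞) *
                    (rD ^ k * (1 + (P * (d : ℝ≥0∞) ^ 2) ^ (k - 1)))) *
                    (((d : ℝ≥0∞) ^ k * rD ^ k) * ((d : ℝ≥0∞) ^ k * rD ^ k)) := by ring
              _ = (36 * c2 * Kconst * Cq ^ 3) * ((k : ℝ≥0∞) *
                    (rD ^ k * (1 + (P * (d : ℝ≥0∞) ^ 2) ^ (k - 1)))) := by
                  rw [hpow1]; ring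
        _ ≤ Cfinal * ((k : ℝ≥0∞) * rD ^ k + (k : ℝ≥0∞) * rP ^ (k - 1)) := by
            apply mul_le_mul_right
            have hexp : rD ^ k * (1 + (P * (d : ℝ≥0∞) ^ 2) ^ (k - 1))
                ≤ rD ^ k + rP ^ (k - 1) := by
              rw [mul_add, mul_one]
              apply add_le_add_right
              have : (P * (d : ℝ≥0∞) ^ 2) ^ (k - 1) = rP ^ (k - 1) * (d : ℝ≥0∞) ^ (k - 1) := by
                rw [hrPdef, ← mul_pow, sq]; ring_nf
              rw [this]
              have hrDsplit : rD ^ k = rD ^ (k - 1) * rD := by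
                rw [← pow_succ]; congr 1; omega
              calc rD ^ k * (rP ^ (k - 1) * (d : ℝ≥0∞) ^ (k - 1))
                  = rP ^ (k - 1) * ((d : ℝ≥0∞) ^ (k - 1) * rD ^ (k - 1)) * rD := by
                    rw [hrDsplit]; ring
                _ = rP ^ (k - 1) * rD := by rw [hpow2, mul_one]
                _ ≤ rP ^ (k - 1) := by
                    nth_rewrite 2 [← mul_one (rP ^ (k - 1))]
                    exact mul_le_mul_right hrD1 _
            calc (k : ℝ≥0∞) * (rD ^ k * (1 + (P * (d : ℝ≥0∞) ^ 2) ^ (k - 1)))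
                ≤ (k : ℝ≥0∞) * (rD ^ k + rP ^ (k - 1)) := mul_le_mul_right hexp _
              _ = (k : ℝ≥0∞) * rD ^ k + (k : ℝ≥0∞) * rP ^ (k - 1) := by rw [mul_add]
    · -- hf
      intro A hAfin
      show meanUpper d k (μ k) A.1 * ((A.1.encard : ℕ∞) : ℝ≥0∞) ^ 2 ≤ _
      have hroot : ([] : Vert d) ∈ A.1 := A.2.1.1
      have hsub : A.1 ⊆ gammaSet d k ([] : Vert d) := A.2.1.2
      have hmean := meanUpper_le hperc hk2 hAfin hroot hsub
      have hcast : ((A.1.encard : ℕ∞) : ℝ≥0∞) = ((hAfin.toFinset.card : ℕ) : ℝ≥0∞) := by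
        rw [hAfin.encard_eq_coe_toFinset_card]
        simp
      rw [hcast]
      calc meanUpper d k (μ k) A.1 * ((hAfin.toFinset.card : ℕ) : ℝ≥0∞) ^ 2
          ≤ ((d : ℝ≥0∞) ^ k * P ^ heightSet A.1 * Q ^ hAfin.toFinset.card * c2) *
              ((hAfin.toFinset.card : ℕ) : ℝ≥0∞) ^ 2 := mul_le_mul_left hmean _
        _ = (c2 * (d : ℝ≥0∞) ^ k) * (P ^ heightSet A.1 * (Q ^ hAfin.toFinset.card *
              ((hAfin.toFinset.card : ℝ≥0∞)) ^ 2)) := by ring
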